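/- arXiv:0804.4404 — 2 statements merged into one kernel-verified Lean document; each statement's English description precedes it below -/
import Mathlib

section
/- Let K ≥ 1 be an integer, t > 0, and let u be a C² map from a neighborhood of the closed disc of radius t centered at 0 in ℝ² to ℝ^K. Then ∫_{B_t(0)} (x·∇u(x))·Δu(x) dx = t² ∫₀^{2π} |∂_r u(t e^{iθ})|² dθ − (t²/2) ∫₀^{2π} |∇u(t e^{iθ})|² dθ, where Δ is the componentwise Laplacian, x·∇u = x₁∂₁u + x₂∂₂u, and the radial derivative is taken with respect to the center 0. -/
open MeasureTheory Metric Filter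
open scoped Topology Real RealInnerProductSpace ENNReal NNReal

noncomputable section

abbrev E2 := EuclideanSpace ℝ (Fin 2)

/-- The point `(cos θ, sin θ)` on the unit circle of `ℝ²`. -/
def circ (θ : ℝ) : E2 := (WithLp.equiv 2 (Fin 2 → ℝ)).symm ![Real.cos θ, Real.sin θ]

section Defs

variable {F : Type*} [NormedAddCommGroup F] [NormedSpace ℝ F]

/-- The `i`-th partial derivative `∂ᵢ u`. -/
def pd (u : E2 → F) (i : Fin 2) (x : E2) : F := fderiv ℝ u x (EuclideanSpace.single i 1)

/-- `|∇u|² = |∂₁u|² + |∂₂u|²`. -/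
def gradSq (u : E2 → F) (x : E2) : ℝ := ‖pd u 0 x‖ ^ 2 + ‖pd u 1 x‖ ^ 2

/-- The componentwise Laplacian `Δu = ∂₁∂₁u + ∂₂∂₂u`. -/
def lap (u : E2 → F) (x : E2) : F :=
  fderiv ℝ (pd u 0) x (EuclideanSpace.single 0 1) + fderiv ℝ (pd u 1) x (EuclideanSpace.single 1 1)

/-- `∇(|∇u|²)·∇u = ∂₁(|∇u|²) ∂₁u + ∂₂(|∇u|²) ∂₂u`. -/
def gradDotGrad (u : E2 → F) (x : E2) : F :=
  fderiv ℝ (gradSq u) x (EuclideanSpace.single 0 1) • pd u 0 x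
    + fderiv ℝ (gradSq u) x (EuclideanSpace.single 1 1) • pd u 1 x

/-- The radial derivative `∂_r u(x) = ((x−x₀)/|x−x₀|)·∇u(x)` with respect to the center `x₀`. -/
def rderiv (x₀ : E2) (u : E2 → F) (x : E2) : F := fderiv ℝ u x (‖x - x₀‖⁻¹ • (x - x₀))

end Defs

/-- `u` is a smooth `(α,ε)`-harmonic map from `Ω ⊆ ℝ²` into the unit sphere `Sⁿ ⊆ ℝ^{n+1}`:
`u` is smooth on `Ω`, sphere-valued, and satisfies
`Δu + (α−1)·(∇(|∇u|²)·∇u)/(ε+|∇u|²) + |∇u|²·u = 0` on `Ω`. -/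
def IsAlphaHarmonic (n : ℕ) (α ε : ℝ) (Ω : Set E2) (u : E2 → EuclideanSpace ℝ (Fin (n+1))) :
    Prop :=
  ContDiffOn ℝ (⊤ : ℕ∞) u Ω ∧ (∀ x ∈ Ω, ‖u x‖ = 1) ∧
    ∀ x ∈ Ω, lap u x + ((α - 1) / (ε + gradSq u x)) • gradDotGrad u x + gradSq u x • u x = 0

section Aux
open Set

def E₀ : E2 := EuclideanSpace.single 0 1
def E₁ : E2 := EuclideanSpace.single 1 1

lemma circ_apply (θ : ℝ) : circ θ 0 = Real.cos θ ∧ circ θ 1 = Real.sin θ := by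
  constructor <;> rfl

lemma circ_eq (θ : ℝ) : circ θ = Real.cos θ • E₀ + Real.sin θ • E₁ := by
  ext i
  fin_cases i <;> simp [circ, E₀, E₁, EuclideanSpace.single_apply]

lemma e2_decomp (x : E2) : x = x 0 • E₀ + x 1 • E₁ := by
  ext i
  fin_cases i <;> simp [E₀, E₁, EuclideanSpace.single_apply]

lemma norm_circ (θ : ℝ) : ‖circ θ‖ = 1 := by
  rw [EuclideanSpace.norm_eq]
  simp [Fin.sum_univ_two, circ, Real.cos_sq_add_sin_sq]

lemma norm_smul_circ (r θ : ℝ) : ‖r • circ θ‖ = |r| := by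
  rw [norm_smul, norm_circ, Real.norm_eq_abs, mul_one]

lemma circ_periodic : Function.Periodic circ (2 * π) := by
  intro θ; unfold circ; simp [Real.cos_add_two_pi, Real.sin_add_two_pi]

lemma hasDerivAt_circ (θ : ℝ) :
    HasDerivAt circ ((-Real.sin θ) • E₀ + Real.cos θ • E₁) θ := by
  have h : ∀ ψ, circ ψ = Real.cos ψ • E₀ + Real.sin ψ • E₁ := circ_eq
  simp_rw [funext h]
  exact ((Real.hasDerivAt_cos θ).smul_const E₀).add ((Real.hasDerivAt_sin θ).smul_const E₁)

def φe : E2 ≃ᵐ ℝ × ℝ :=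
  (MeasurableEquiv.toLp 2 (Fin 2 → ℝ)).symm.trans (MeasurableEquiv.finTwoArrow)

lemma φe_pres : MeasurePreserving φe volume volume :=
  (volume_preserving_finTwoArrow ℝ).comp (EuclideanSpace.volume_preserving_symm_measurableEquiv_toLp (Fin 2))

lemma φe_symm_apply (p : ℝ × ℝ) : φe.symm p = (WithLp.equiv 2 (Fin 2 → ℝ)).symm ![p.1, p.2] := by
  rfl

lemma norm_φe_symm (p : ℝ × ℝ) : ‖φe.symm p‖ = Real.sqrt (p.1 ^ 2 + p.2 ^ 2) := by
  rw [φe_symm_apply, EuclideanSpace.norm_eq]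
  simp [Fin.sum_univ_two, sq_abs]

lemma φe_symm_polar (r θ : ℝ) : φe.symm (r * Real.cos θ, r * Real.sin θ) = r • circ θ := by
  rw [φe_symm_apply]
  ext i
  fin_cases i <;> simp [circ]

lemma setIntegral_ball_polar (t : ℝ) (ht : 0 < t) (f : E2 → ℝ) :
    ∫ x in ball (0:E2) t, f x
      = ∫ p in Ioo (0:ℝ) t ×ˢ Ioo (-π) π, p.1 * f (p.1 • circ p.2) := by
  have h1 : ∫ x in ball (0:E2) t, f x = ∫ p in φe.symm ⁻¹' (ball (0:E2) t), f (φe.symm p) :=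
    ((φe_pres.symm φe).setIntegral_preimage_emb φe.symm.measurableEmbedding f _).symm
  set S : Set (ℝ × ℝ) := {p | Real.sqrt (p.1 ^ 2 + p.2 ^ 2) < t} with hS
  have hpre : φe.symm ⁻¹' (ball (0:E2) t) = S := by
    ext p; simp [mem_ball, dist_eq_norm, norm_φe_symm, hS]
  have hSopen : IsOpen S := by
    have : Continuous fun p : ℝ × ℝ => Real.sqrt (p.1 ^ 2 + p.2 ^ 2) := by fun_prop
    exact isOpen_lt this continuous_const
  have h2 : ∫ p in S, f (φe.symm p) = ∫ p, S.indicator (fun p => f (φe.symm p)) p :=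
    (integral_indicator hSopen.measurableSet).symm
  rw [h1, hpre, h2, ← integral_comp_polarCoord_symm]
  have h3 : ∀ p : ℝ × ℝ,
      p.1 • S.indicator (fun q => f (φe.symm q)) (polarCoord.symm p)
        = (polarCoord.symm ⁻¹' S).indicator (fun q => q.1 * f (φe.symm (polarCoord.symm q))) p := by
    intro p
    by_cases hp : polarCoord.symm p ∈ S
    · rw [Set.indicator_of_mem hp, Set.indicator_of_mem (by exact hp)]; rfl
    · rw [Set.indicator_of_notMem hp, Set.indicator_of_notMem (by exact hp), smul_zero]
  simp_rw [h3]
  have hcont : Continuous (fun p : ℝ × ℝ => polarCoord.symm p) := by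
    simp only [polarCoord_symm_apply]; fun_prop
  rw [setIntegral_indicator (hSopen.preimage hcont).measurableSet]
  have h4 : polarCoord.target ∩ polarCoord.symm ⁻¹' S = Ioo (0:ℝ) t ×ˢ Ioo (-π) π := by
    ext ⟨r, θ⟩
    simp only [polarCoord_target, mem_inter_iff, mem_prod, mem_Ioi, mem_Ioo, mem_preimage,
      polarCoord_symm_apply, hS, mem_setOf_eq]
    constructor
    · rintro ⟨⟨hr, hθ⟩, hlt⟩
      refine ⟨⟨hr, ?_⟩, hθ⟩
      have h0 : (r * Real.cos θ) ^ 2 + (r * Real.sin θ) ^ 2 = r ^ 2 := by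
        have := Real.sin_sq_add_cos_sq θ; nlinarith
      rw [h0, Real.sqrt_sq hr.le] at hlt
      exact hlt
    · rintro ⟨⟨hr, hrt⟩, hθ⟩
      refine ⟨⟨hr, hθ⟩, ?_⟩
      have h0 : (r * Real.cos θ) ^ 2 + (r * Real.sin θ) ^ 2 = r ^ 2 := by
        have := Real.sin_sq_add_cos_sq θ; nlinarith
      rw [h0, Real.sqrt_sq hr.le]
      exact hrt
  rw [h4]
  apply setIntegral_congr_fun ((measurableSet_Ioo).prod measurableSet_Ioo)
  intro ⟨r, θ⟩ _
  simp only [polarCoord_symm_apply, φe_symm_polar]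

def dcirc (θ : ℝ) : E2 := (-Real.sin θ) • E₀ + Real.cos θ • E₁

lemma continuous_circ : Continuous circ := by
  have : circ = fun θ => Real.cos θ • E₀ + Real.sin θ • E₁ := funext circ_eq
  rw [this]; fun_prop

lemma continuous_dcirc : Continuous dcirc := by unfold dcirc; fun_prop

lemma setIntegral_swap_vol (f : ℝ × ℝ → ℝ) {s u : Set ℝ} (hs : MeasurableSet s)
    (hu : MeasurableSet u) :
    ∫ z in s ×ˢ u, f z = ∫ z in u ×ˢ s, f (z.2, z.1) := by
  rw [← integral_indicator (hs.prod hu), ← integral_indicator (hu.prod hs)]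
  rw [Measure.volume_eq_prod (α := ℝ) (β := ℝ)]
  rw [← integral_prod_swap ((s ×ˢ u).indicator f)]
  congr 1
  funext z
  simp only [Set.indicator_apply, Prod.swap, Set.mem_prod]
  by_cases h1 : z.2 ∈ s <;> by_cases h2 : z.1 ∈ u <;> simp [h1, h2]

lemma divergence_disc (t : ℝ) (ht : 0 < t) (Ω : Set E2) (hΩ : IsOpen Ω)
    (hsub : closedBall (0:E2) t ⊆ Ω) (W₀ W₁ : E2 → ℝ)
    (hW₀ : ContDiffOn ℝ 1 W₀ Ω) (hW₁ : ContDiffOn ℝ 1 W₁ Ω) :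
    ∫ x in ball (0:E2) t, (pd W₀ 0 x + pd W₁ 1 x)
      = t * ∫ θ in (0:ℝ)..(2*π),
          (W₀ (t • circ θ) * Real.cos θ + W₁ (t • circ θ) * Real.sin θ) := by
  have hmem : ∀ {r θ : ℝ}, |r| ≤ t → r • circ θ ∈ Ω := by
    intro r θ hr
    apply hsub
    simp only [mem_closedBall, dist_zero_right, norm_smul_circ]
    exact hr
  have hd₀ : ∀ {x}, x ∈ Ω → DifferentiableAt ℝ W₀ x := fun {x} hx =>
    (hW₀.differentiableOn one_ne_zero).differentiableAt (hΩ.mem_nhds hx)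
  have hd₁ : ∀ {x}, x ∈ Ω → DifferentiableAt ℝ W₁ x := fun {x} hx =>
    (hW₁.differentiableOn one_ne_zero).differentiableAt (hΩ.mem_nhds hx)
  have hc₀ : ContinuousOn (fderiv ℝ W₀) Ω := hW₀.continuousOn_fderiv_of_isOpen hΩ le_rfl
  have hc₁ : ContinuousOn (fderiv ℝ W₁) Ω := hW₁.continuousOn_fderiv_of_isOpen hΩ le_rfl
  set g : ℝ × ℝ → E2 := fun p => p.1 • circ p.2 with hgdef
  have hgcont : Continuous g := continuous_fst.smul (continuous_circ.comp continuous_snd)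
  set C₁ : ℝ × ℝ → ℝ := fun p =>
    (W₀ (g p) * Real.cos p.2 + W₁ (g p) * Real.sin p.2)
      + p.1 * (fderiv ℝ W₀ (g p) (circ p.2) * Real.cos p.2
        + fderiv ℝ W₁ (g p) (circ p.2) * Real.sin p.2) with hC₁
  set C₂ : ℝ × ℝ → ℝ := fun p =>
    (fderiv ℝ W₀ (g p) (p.1 • dcirc p.2) * (-Real.sin p.2) + (-(W₀ (g p))) * Real.cos p.2)
      + (fderiv ℝ W₁ (g p) (p.1 • dcirc p.2) * Real.cos p.2
          + W₁ (g p) * (-Real.sin p.2)) with hC₂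
  -- derivative in r
  have hA : ∀ (θ : ℝ) {r : ℝ}, |r| ≤ t →
      HasDerivAt (fun s => s * (W₀ (s • circ θ) * Real.cos θ + W₁ (s • circ θ) * Real.sin θ))
        (C₁ (r, θ)) r := by
    intro θ r hr
    have hx := hmem (θ := θ) hr
    have hsm : HasDerivAt (fun s : ℝ => s • circ θ) (circ θ) r := by
      simpa using (hasDerivAt_id r).smul_const (circ θ)
    have h0 : HasDerivAt (fun s => W₀ (s • circ θ)) (fderiv ℝ W₀ (r • circ θ) (circ θ)) r :=
      (hd₀ hx).hasFDerivAt.comp_hasDerivAt r hsm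
    have h1 : HasDerivAt (fun s => W₁ (s • circ θ)) (fderiv ℝ W₁ (r • circ θ) (circ θ)) r :=
      (hd₁ hx).hasFDerivAt.comp_hasDerivAt r hsm
    have := (hasDerivAt_id r).fun_mul ((h0.mul_const (Real.cos θ)).fun_add (h1.mul_const (Real.sin θ)))
    refine this.congr_deriv ?_
    simp only [hC₁, hgdef, id_eq]
    ring
  -- derivative in θ
  have hB : ∀ {r : ℝ}, |r| ≤ t → ∀ (θ : ℝ),
      HasDerivAt (fun ψ => -(W₀ (r • circ ψ)) * Real.sin ψ + W₁ (r • circ ψ) * Real.cos ψ)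
        (C₂ (r, θ)) θ := by
    intro r hr θ
    have hx := hmem (θ := θ) hr
    have hsm : HasDerivAt (fun ψ : ℝ => r • circ ψ) (r • dcirc θ) θ :=
      (hasDerivAt_circ θ).const_smul r
    have h0 : HasDerivAt (fun ψ => W₀ (r • circ ψ)) (fderiv ℝ W₀ (r • circ θ) (r • dcirc θ)) θ :=
      (hd₀ hx).hasFDerivAt.comp_hasDerivAt θ hsm
    have h1 : HasDerivAt (fun ψ => W₁ (r • circ ψ)) (fderiv ℝ W₁ (r • circ θ) (r • dcirc θ)) θ :=
      (hd₁ hx).hasFDerivAt.comp_hasDerivAt θ hsm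
    have := (h0.fun_neg.fun_mul (Real.hasDerivAt_sin θ)).fun_add (h1.fun_mul (Real.hasDerivAt_cos θ))
    refine this.congr_deriv ?_
    simp only [hC₂, hgdef]
    ring
  -- pointwise divergence identity
  have hkey : ∀ (θ : ℝ) {r : ℝ}, |r| ≤ t →
      C₁ (r, θ) + C₂ (r, θ) = r * (pd W₀ 0 (r • circ θ) + pd W₁ 1 (r • circ θ)) := by
    intro θ r hr
    have e₀ : ∀ (L : E2 →L[ℝ] ℝ), L (circ θ) =
        Real.cos θ * L (EuclideanSpace.single 0 1) + Real.sin θ * L (EuclideanSpace.single 1 1) := by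
      intro L
      rw [circ_eq]
      simp [E₀, E₁]
    have e₁ : ∀ (L : E2 →L[ℝ] ℝ), L (r • dcirc θ) =
        r * (-Real.sin θ) * L (EuclideanSpace.single 0 1)
          + r * Real.cos θ * L (EuclideanSpace.single 1 1) := by
      intro L
      simp only [dcirc, E₀, E₁, smul_add, smul_smul, map_add, ContinuousLinearMap.map_smul,
        smul_eq_mul]
    have pyth := Real.sin_sq_add_cos_sq θ
    simp only [hC₁, hC₂, hgdef, pd]
    rw [e₀ (fderiv ℝ W₀ (r • circ θ)), e₀ (fderiv ℝ W₁ (r • circ θ)),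
      e₁ (fderiv ℝ W₀ (r • circ θ)), e₁ (fderiv ℝ W₁ (r • circ θ))]
    linear_combination (r * (fderiv ℝ W₀ (r • circ θ) (EuclideanSpace.single 0 1)
      + fderiv ℝ W₁ (r • circ θ) (EuclideanSpace.single 1 1))) * pyth
  -- continuity on compact sets
  have hKcomp : IsCompact (Icc (0:ℝ) t ×ˢ Icc (-π) π) := isCompact_Icc.prod isCompact_Icc
  have hmapsK : MapsTo g (Icc (0:ℝ) t ×ˢ Icc (-π) π) Ω := by
    rintro ⟨r, θ⟩ ⟨hr, _⟩
    exact hmem (abs_le.mpr ⟨by linarith [hr.1], hr.2⟩)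
  have hcircsnd : ContinuousOn (fun p : ℝ × ℝ => circ p.2) (Icc (0:ℝ) t ×ˢ Icc (-π) π) :=
    (continuous_circ.comp continuous_snd).continuousOn
  have hcos : ContinuousOn (fun p : ℝ × ℝ => Real.cos p.2) (Icc (0:ℝ) t ×ˢ Icc (-π) π) :=
    (Real.continuous_cos.comp continuous_snd).continuousOn
  have hsin : ContinuousOn (fun p : ℝ × ℝ => Real.sin p.2) (Icc (0:ℝ) t ×ˢ Icc (-π) π) :=
    (Real.continuous_sin.comp continuous_snd).continuousOn
  have hW₀g : ContinuousOn (fun p => W₀ (g p)) (Icc (0:ℝ) t ×ˢ Icc (-π) π) :=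
    hW₀.continuousOn.comp hgcont.continuousOn hmapsK
  have hW₁g : ContinuousOn (fun p => W₁ (g p)) (Icc (0:ℝ) t ×ˢ Icc (-π) π) :=
    hW₁.continuousOn.comp hgcont.continuousOn hmapsK
  have hF₀ : ContinuousOn (fun p => fderiv ℝ W₀ (g p)) (Icc (0:ℝ) t ×ˢ Icc (-π) π) :=
    hc₀.comp hgcont.continuousOn hmapsK
  have hF₁ : ContinuousOn (fun p => fderiv ℝ W₁ (g p)) (Icc (0:ℝ) t ×ˢ Icc (-π) π) :=
    hc₁.comp hgcont.continuousOn hmapsK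
  have hdd : ContinuousOn (fun p : ℝ × ℝ => p.1 • dcirc p.2) (Icc (0:ℝ) t ×ˢ Icc (-π) π) :=
    (continuous_fst.smul (continuous_dcirc.comp continuous_snd)).continuousOn
  have hC₁cont : ContinuousOn C₁ (Icc (0:ℝ) t ×ˢ Icc (-π) π) :=
    ((hW₀g.mul hcos).add (hW₁g.mul hsin)).add (continuous_fst.continuousOn.mul
      (((hF₀.clm_apply hcircsnd).mul hcos).add ((hF₁.clm_apply hcircsnd).mul hsin)))
  have hC₂cont : ContinuousOn C₂ (Icc (0:ℝ) t ×ˢ Icc (-π) π) :=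
    (((hF₀.clm_apply hdd).mul hsin.neg).add (hW₀g.neg.mul hcos)).add
      (((hF₁.clm_apply hdd).mul hcos).add (hW₁g.mul hsin.neg))
  have hPK : Ioo (0:ℝ) t ×ˢ Ioo (-π) π ⊆ Icc (0:ℝ) t ×ˢ Icc (-π) π :=
    prod_mono Ioo_subset_Icc_self Ioo_subset_Icc_self
  have hPm : MeasurableSet (Ioo (0:ℝ) t ×ˢ Ioo (-π) π) :=
    measurableSet_Ioo.prod measurableSet_Ioo
  have hC₁int : IntegrableOn C₁ (Ioo (0:ℝ) t ×ˢ Ioo (-π) π) :=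
    (hC₁cont.integrableOn_compact hKcomp).mono_set hPK
  have hC₂int : IntegrableOn C₂ (Ioo (0:ℝ) t ×ˢ Ioo (-π) π) :=
    (hC₂cont.integrableOn_compact hKcomp).mono_set hPK
  have hC₂zero : ∫ p in Ioo (0:ℝ) t ×ˢ Ioo (-π) π, C₂ p = 0 := by
    rw [Measure.volume_eq_prod (α := ℝ) (β := ℝ)] at hC₂int ⊢
    rw [setIntegral_prod _ hC₂int]
    have inner : ∀ r ∈ Ioo (0:ℝ) t, ∫ θ in Ioo (-π) π, C₂ (r, θ) = 0 := by
      intro r hr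
      have hrt : |r| ≤ t := abs_le.mpr ⟨by linarith [hr.1], hr.2.le⟩
      have h1 : ∫ θ in Ioo (-π) π, C₂ (r, θ) = ∫ θ in (-π)..π, C₂ (r, θ) := by
        rw [intervalIntegral.integral_of_le (by linarith [Real.pi_pos]),
          integral_Ioc_eq_integral_Ioo]
      rw [h1, intervalIntegral.integral_eq_sub_of_hasDerivAt (fun θ _ => hB hrt θ) ?_]
      · have hc : circ π = circ (-π) := by
          unfold circ
          simp [Real.cos_neg, Real.sin_neg]
        rw [hc]
        simp [Real.sin_pi, Real.cos_pi, Real.sin_neg, Real.cos_neg]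
      · apply ContinuousOn.intervalIntegrable
        have hsub2 : MapsTo (fun θ : ℝ => ((r : ℝ), θ)) (uIcc (-π) π) (Icc (0:ℝ) t ×ˢ Icc (-π) π) := by
          intro θ hθ
          rw [uIcc_of_le (by linarith [Real.pi_pos])] at hθ
          exact ⟨⟨hr.1.le, hr.2.le⟩, hθ⟩
        exact hC₂cont.comp (by fun_prop) hsub2
    rw [setIntegral_congr_fun measurableSet_Ioo inner]
    simp
  have hC₁val : ∫ p in Ioo (0:ℝ) t ×ˢ Ioo (-π) π, C₁ p
      = t * ∫ θ in (0:ℝ)..(2*π),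
          (W₀ (t • circ θ) * Real.cos θ + W₁ (t • circ θ) * Real.sin θ) := by
    rw [setIntegral_swap_vol C₁ measurableSet_Ioo measurableSet_Ioo]
    have hswapint : IntegrableOn (fun z : ℝ × ℝ => C₁ (z.2, z.1)) (Ioo (-π) π ×ˢ Ioo (0:ℝ) t) :=
      ((hC₁cont.comp (continuous_snd.prodMk continuous_fst).continuousOn
        (fun p hp => ⟨hp.2, hp.1⟩)).integrableOn_compact
          (isCompact_Icc.prod isCompact_Icc)).mono_set
        (prod_mono Ioo_subset_Icc_self Ioo_subset_Icc_self)
    rw [Measure.volume_eq_prod (α := ℝ) (β := ℝ)] at hswapint ⊢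
    rw [setIntegral_prod _ hswapint]
    have hinner : ∀ θ ∈ Ioo (-π) π, ∫ r in Ioo (0:ℝ) t, C₁ (r, θ)
        = t * (W₀ (t • circ θ) * Real.cos θ + W₁ (t • circ θ) * Real.sin θ) := by
      intro θ hθ
      have h1 : ∫ r in Ioo (0:ℝ) t, C₁ (r, θ) = ∫ r in (0:ℝ)..t, C₁ (r, θ) := by
        rw [intervalIntegral.integral_of_le ht.le, integral_Ioc_eq_integral_Ioo]
      have hmemIcc : ∀ r ∈ uIcc (0:ℝ) t, |r| ≤ t := by
        intro r hr
        rw [uIcc_of_le ht.le] at hr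
        exact abs_le.mpr ⟨by linarith [hr.1], hr.2⟩
      rw [h1, intervalIntegral.integral_eq_sub_of_hasDerivAt (fun r hr => hA θ (hmemIcc r hr)) ?_]
      · ring
      · apply ContinuousOn.intervalIntegrable
        have hsub2 : MapsTo (fun r : ℝ => ((r : ℝ), θ)) (uIcc (0:ℝ) t) (Icc (0:ℝ) t ×ˢ Icc (-π) π) := by
          intro r hr
          rw [uIcc_of_le ht.le] at hr
          exact ⟨hr, ⟨hθ.1.le, hθ.2.le⟩⟩
        exact hC₁cont.comp (by fun_prop) hsub2
    rw [setIntegral_congr_fun measurableSet_Ioo hinner]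
    have h2 : ∫ θ in Ioo (-π) π, t * (W₀ (t • circ θ) * Real.cos θ + W₁ (t • circ θ) * Real.sin θ)
        = ∫ θ in (-π)..π, t * (W₀ (t • circ θ) * Real.cos θ + W₁ (t • circ θ) * Real.sin θ) := by
      rw [intervalIntegral.integral_of_le (by linarith [Real.pi_pos]),
        integral_Ioc_eq_integral_Ioo]
    rw [h2, intervalIntegral.integral_const_mul]
    congr 1
    have hper : Function.Periodic
        (fun θ => W₀ (t • circ θ) * Real.cos θ + W₁ (t • circ θ) * Real.sin θ) (2 * π) := by
      intro θ
      simp only [circ_periodic θ, Real.cos_add_two_pi, Real.sin_add_two_pi]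
    have hshift := hper.intervalIntegral_add_eq (-π) 0
    rw [show -π + 2 * π = π from by ring, zero_add] at hshift
    exact hshift
  calc ∫ x in ball (0:E2) t, (pd W₀ 0 x + pd W₁ 1 x)
      = ∫ p in Ioo (0:ℝ) t ×ˢ Ioo (-π) π,
          p.1 * (pd W₀ 0 (p.1 • circ p.2) + pd W₁ 1 (p.1 • circ p.2)) :=
        setIntegral_ball_polar t ht _
    _ = ∫ p in Ioo (0:ℝ) t ×ˢ Ioo (-π) π, (C₁ p + C₂ p) := by
        apply setIntegral_congr_fun hPm
        rintro ⟨r, θ⟩ ⟨hr, hθ⟩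
        exact (hkey θ (abs_le.mpr ⟨by linarith [hr.1], hr.2.le⟩)).symm
    _ = (∫ p in Ioo (0:ℝ) t ×ˢ Ioo (-π) π, C₁ p) + ∫ p in Ioo (0:ℝ) t ×ˢ Ioo (-π) π, C₂ p :=
        integral_add hC₁int hC₂int
    _ = t * ∫ θ in (0:ℝ)..(2*π),
          (W₀ (t • circ θ) * Real.cos θ + W₁ (t • circ θ) * Real.sin θ) := by
        rw [hC₂zero, add_zero, hC₁val]


/-- For a `C²` map `u` on a neighborhood of the closed disc of radius `t`
centered at `0` in `ℝ²` with values in `ℝ^K`,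
`∫_{B_t(0)} (x·∇u)·Δu dx = t² ∫₀^{2π} |∂_r u(te^{iθ})|² dθ − (t²/2) ∫₀^{2π} |∇u(te^{iθ})|² dθ`. -/
theorem stmt1 (K : ℕ) (hK : 1 ≤ K) (t : ℝ) (ht : 0 < t)
    (u : E2 → EuclideanSpace ℝ (Fin K)) (Ω : Set E2) (hΩ : IsOpen Ω)
    (hsub : closedBall (0:E2) t ⊆ Ω) (hu : ContDiffOn ℝ 2 u Ω) :
    (∫ x in ball (0:E2) t, ⟪fderiv ℝ u x x, lap u x⟫)
      = t ^ 2 * (∫ θ in (0:ℝ)..(2 * π), ‖rderiv 0 u (t • circ θ)‖ ^ 2)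
        - (t ^ 2 / 2) * ∫ θ in (0:ℝ)..(2 * π), gradSq u (t • circ θ) := by
  have hπ := Real.pi_pos
  set W₀ : E2 → ℝ := fun y =>
    (1/2 : ℝ) * (y 0 * (⟪pd u 0 y, pd u 0 y⟫ - ⟪pd u 1 y, pd u 1 y⟫)) + y 1 * ⟪pd u 1 y, pd u 0 y⟫
    with hW₀def
  set W₁ : E2 → ℝ := fun y =>
    (1/2 : ℝ) * (y 1 * (⟪pd u 1 y, pd u 1 y⟫ - ⟪pd u 0 y, pd u 0 y⟫)) + y 0 * ⟪pd u 0 y, pd u 1 y⟫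
    with hW₁def
  have hfd : ContDiffOn ℝ 1 (fderiv ℝ u) Ω := hu.fderiv_of_isOpen hΩ le_rfl
  have hpdc : ∀ i : Fin 2, ContDiffOn ℝ 1 (pd u i) Ω := fun i =>
    hfd.clm_apply contDiffOn_const
  have hprojc : ∀ i : Fin 2, ContDiffOn ℝ 1 (fun y : E2 => y i) Ω := fun i =>
    (EuclideanSpace.proj (𝕜 := ℝ) i).contDiff.contDiffOn
  have hW₀C : ContDiffOn ℝ 1 W₀ Ω := by
    rw [hW₀def]
    exact (contDiffOn_const.mul ((hprojc 0).mul
        (((hpdc 0).inner ℝ (hpdc 0)).sub ((hpdc 1).inner ℝ (hpdc 1))))).add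
      ((hprojc 1).mul ((hpdc 1).inner ℝ (hpdc 0)))
  have hW₁C : ContDiffOn ℝ 1 W₁ Ω := by
    rw [hW₁def]
    exact (contDiffOn_const.mul ((hprojc 1).mul
        (((hpdc 1).inner ℝ (hpdc 1)).sub ((hpdc 0).inner ℝ (hpdc 0))))).add
      ((hprojc 0).mul ((hpdc 0).inner ℝ (hpdc 1)))
  have hdiffpd : ∀ (i : Fin 2) {x}, x ∈ Ω → DifferentiableAt ℝ (pd u i) x := fun i {x} hx =>
    ((hpdc i).differentiableOn one_ne_zero).differentiableAt (hΩ.mem_nhds hx)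
  have hdifffd : ∀ {x}, x ∈ Ω → DifferentiableAt ℝ (fderiv ℝ u) x := fun {x} hx =>
    (hfd.differentiableOn one_ne_zero).differentiableAt (hΩ.mem_nhds hx)
  -- the divergence identity, pointwise
  have key2 : ∀ x ∈ Ω, pd W₀ 0 x + pd W₁ 1 x = ⟪fderiv ℝ u x x, lap u x⟫ := by
    intro x hx
    have hd0 := hdiffpd 0 hx
    have hd1 := hdiffpd 1 hx
    have hdF := hdifffd hx
    have hpe : ∀ i : Fin 2, HasFDerivAt (fun y : E2 => y i)
        (EuclideanSpace.proj (𝕜 := ℝ) i) x := fun i =>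
      (EuclideanSpace.proj (𝕜 := ℝ) i).hasFDerivAt
    -- Schwarz symmetry
    have hsy : IsSymmSndFDerivAt ℝ u x :=
      (hu.contDiffAt (hΩ.mem_nhds hx)).isSymmSndFDerivAt (by norm_num)
    have epd : ∀ i : Fin 2, ∀ v : E2, fderiv ℝ (pd u i) x v
        = fderiv ℝ (fderiv ℝ u) x v (EuclideanSpace.single i 1) := by
      intro i v
      have : pd u i = fun y => (fderiv ℝ u y) ((fun _ : E2 => EuclideanSpace.single i 1) y) := rfl
      rw [this, fderiv_clm_apply hdF (differentiableAt_const _)]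
      simp
    have hsymm : fderiv ℝ (pd u 0) x (EuclideanSpace.single 1 1)
        = fderiv ℝ (pd u 1) x (EuclideanSpace.single 0 1) := by
      rw [epd 0 (EuclideanSpace.single 1 1), epd 1 (EuclideanSpace.single 0 1)]
      exact hsy _ _
    -- fderiv of the inner-product functions
    have dAB : ∀ i j : Fin 2, DifferentiableAt ℝ (fun y => (⟪pd u i y, pd u j y⟫ : ℝ)) x :=
      fun i j => (hdiffpd i hx).inner ℝ (hdiffpd j hx)
    have eAB : ∀ i j : Fin 2, ∀ v : E2,
        fderiv ℝ (fun y => (⟪pd u i y, pd u j y⟫ : ℝ)) x v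
          = ⟪pd u i x, fderiv ℝ (pd u j) x v⟫ + ⟪fderiv ℝ (pd u i) x v, pd u j x⟫ :=
      fun i j v => fderiv_inner_apply (𝕜 := ℝ) (hdiffpd i hx) (hdiffpd j hx) v
    have dproj0 : DifferentiableAt ℝ (fun y : E2 => y 0) x := (hpe 0).differentiableAt
    have dproj1 : DifferentiableAt ℝ (fun y : E2 => y 1) x := (hpe 1).differentiableAt
    have hp0 : fderiv ℝ (fun y : E2 => y 0) x = EuclideanSpace.proj (𝕜 := ℝ) 0 := (hpe 0).fderiv
    have hp1 : fderiv ℝ (fun y : E2 => y 1) x = EuclideanSpace.proj (𝕜 := ℝ) 1 := (hpe 1).fderiv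
    have dS0 : DifferentiableAt ℝ
        (fun y => (⟪pd u 0 y, pd u 0 y⟫ : ℝ) - ⟪pd u 1 y, pd u 1 y⟫) x := (dAB 0 0).sub (dAB 1 1)
    have dS1 : DifferentiableAt ℝ
        (fun y => (⟪pd u 1 y, pd u 1 y⟫ : ℝ) - ⟪pd u 0 y, pd u 0 y⟫) x := (dAB 1 1).sub (dAB 0 0)
    have h₀ : pd W₀ 0 x
        = (1/2 : ℝ) * (1 * (⟪pd u 0 x, pd u 0 x⟫ - ⟪pd u 1 x, pd u 1 x⟫)
            + x 0 * ((⟪pd u 0 x, fderiv ℝ (pd u 0) x (EuclideanSpace.single 0 1)⟫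
                + ⟪fderiv ℝ (pd u 0) x (EuclideanSpace.single 0 1), pd u 0 x⟫)
              - (⟪pd u 1 x, fderiv ℝ (pd u 1) x (EuclideanSpace.single 0 1)⟫
                + ⟪fderiv ℝ (pd u 1) x (EuclideanSpace.single 0 1), pd u 1 x⟫)))
          + (0 * ⟪pd u 1 x, pd u 0 x⟫
            + x 1 * (⟪pd u 1 x, fderiv ℝ (pd u 0) x (EuclideanSpace.single 0 1)⟫
              + ⟪fderiv ℝ (pd u 1) x (EuclideanSpace.single 0 1), pd u 0 x⟫)) := by
      show fderiv ℝ W₀ x (EuclideanSpace.single 0 1) = _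
      rw [hW₀def]
      rw [fderiv_fun_add ((dproj0.fun_mul dS0).const_mul ((1:ℝ)/2)) (dproj1.fun_mul (dAB 1 0)),
        ContinuousLinearMap.add_apply,
        fderiv_const_mul (dproj0.fun_mul dS0) ((1:ℝ)/2),
        fderiv_fun_mul dproj0 dS0, fderiv_fun_mul dproj1 (dAB 1 0)]
      simp only [ContinuousLinearMap.smul_apply, ContinuousLinearMap.add_apply, smul_eq_mul]
      rw [fderiv_fun_sub (dAB 0 0) (dAB 1 1), ContinuousLinearMap.sub_apply,
        eAB 0 0 _, eAB 1 1 _, eAB 1 0 _, hp0, hp1]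
      simp [EuclideanSpace.single_apply]
      ring
    have h₁ : pd W₁ 1 x
        = (1/2 : ℝ) * (1 * (⟪pd u 1 x, pd u 1 x⟫ - ⟪pd u 0 x, pd u 0 x⟫)
            + x 1 * ((⟪pd u 1 x, fderiv ℝ (pd u 1) x (EuclideanSpace.single 1 1)⟫
                + ⟪fderiv ℝ (pd u 1) x (EuclideanSpace.single 1 1), pd u 1 x⟫)
              - (⟪pd u 0 x, fderiv ℝ (pd u 0) x (EuclideanSpace.single 1 1)⟫
                + ⟪fderiv ℝ (pd u 0) x (EuclideanSpace.single 1 1), pd u 0 x⟫)))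
          + (0 * ⟪pd u 0 x, pd u 1 x⟫
            + x 0 * (⟪pd u 0 x, fderiv ℝ (pd u 1) x (EuclideanSpace.single 1 1)⟫
              + ⟪fderiv ℝ (pd u 0) x (EuclideanSpace.single 1 1), pd u 1 x⟫)) := by
      show fderiv ℝ W₁ x (EuclideanSpace.single 1 1) = _
      rw [hW₁def]
      rw [fderiv_fun_add ((dproj1.fun_mul dS1).const_mul ((1:ℝ)/2)) (dproj0.fun_mul (dAB 0 1)),
        ContinuousLinearMap.add_apply,
        fderiv_const_mul (dproj1.fun_mul dS1) ((1:ℝ)/2),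
        fderiv_fun_mul dproj1 dS1, fderiv_fun_mul dproj0 (dAB 0 1)]
      simp only [ContinuousLinearMap.smul_apply, ContinuousLinearMap.add_apply, smul_eq_mul]
      rw [fderiv_fun_sub (dAB 1 1) (dAB 0 0), ContinuousLinearMap.sub_apply,
        eAB 1 1 _, eAB 0 0 _, eAB 0 1 _, hp0, hp1]
      simp [EuclideanSpace.single_apply]
      ring
    have hS : fderiv ℝ u x x = x 0 • pd u 0 x + x 1 • pd u 1 x := by
      calc fderiv ℝ u x x = fderiv ℝ u x (x 0 • E₀ + x 1 • E₁) := by rw [← e2_decomp x]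
        _ = x 0 • pd u 0 x + x 1 • pd u 1 x := by
            simp [pd, E₀, E₁]
    have hlap : lap u x = fderiv ℝ (pd u 0) x (EuclideanSpace.single 0 1)
        + fderiv ℝ (pd u 1) x (EuclideanSpace.single 1 1) := rfl
    rw [h₀, h₁, hS, hlap]
    simp only [inner_add_left, inner_add_right, real_inner_smul_left]
    rw [hsymm]
    rw [real_inner_comm (fderiv ℝ (pd u 1) x (EuclideanSpace.single 0 1)) (pd u 0 x),
      real_inner_comm (fderiv ℝ (pd u 0) x (EuclideanSpace.single 0 1)) (pd u 0 x),
      real_inner_comm (fderiv ℝ (pd u 1) x (EuclideanSpace.single 0 1)) (pd u 1 x),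
      real_inner_comm (fderiv ℝ (pd u 1) x (EuclideanSpace.single 1 1)) (pd u 1 x),
      real_inner_comm (fderiv ℝ (pd u 1) x (EuclideanSpace.single 1 1)) (pd u 0 x)]
    ring
  have hdiv := divergence_disc t ht Ω hΩ hsub W₀ W₁ hW₀C hW₁C
  have hLHS : (∫ x in ball (0:E2) t, (⟪fderiv ℝ u x x, lap u x⟫ : ℝ))
      = ∫ x in ball (0:E2) t, (pd W₀ 0 x + pd W₁ 1 x) := by
    apply setIntegral_congr_fun measurableSet_ball
    intro x hx
    exact (key2 x (hsub (ball_subset_closedBall hx))).symm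
  rw [hLHS, hdiv]
  -- boundary identity
  have hrd : ∀ θ : ℝ, rderiv 0 u (t • circ θ) = fderiv ℝ u (t • circ θ) (circ θ) := by
    intro θ
    unfold rderiv
    rw [sub_zero, norm_smul_circ, abs_of_pos ht, smul_smul, inv_mul_cancel₀ ht.ne', one_smul]
  simp only [hrd]
  have hbd : ∀ θ : ℝ, t * (W₀ (t • circ θ) * Real.cos θ + W₁ (t • circ θ) * Real.sin θ)
      = t^2 * ‖fderiv ℝ u (t • circ θ) (circ θ)‖^2 - t^2/2 * gradSq u (t • circ θ) := by
    intro θ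
    have hy0 : (t • circ θ) 0 = t * Real.cos θ := rfl
    have hy1 : (t • circ θ) 1 = t * Real.sin θ := rfl
    have hexp : fderiv ℝ u (t • circ θ) (circ θ)
        = Real.cos θ • pd u 0 (t • circ θ) + Real.sin θ • pd u 1 (t • circ θ) := by
      rw [circ_eq]
      simp [pd, E₀, E₁]
    rw [hexp]
    simp only [hW₀def, hW₁def, hy0, hy1]
    rw [← real_inner_self_eq_norm_sq]
    unfold gradSq
    rw [← real_inner_self_eq_norm_sq, ← real_inner_self_eq_norm_sq]
    simp only [inner_add_left, inner_add_right, real_inner_smul_left, real_inner_smul_right]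
    rw [real_inner_comm (pd u 1 (t • circ θ)) (pd u 0 (t • circ θ))]
    have pyth := Real.sin_sq_add_cos_sq θ
    linear_combination (-(t^2/2) * (⟪pd u 0 (t • circ θ), pd u 0 (t • circ θ)⟫
      + ⟪pd u 1 (t • circ θ), pd u 1 (t • circ θ)⟫)) * pyth
  -- continuity and integrability on [0, 2π]
  have hmapsθ : MapsTo (fun θ : ℝ => t • circ θ) (uIcc (0:ℝ) (2*π)) Ω := by
    intro θ _
    apply hsub
    simp only [mem_closedBall, dist_zero_right, norm_smul_circ, abs_of_pos ht, le_refl]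
  have hcF : ContinuousOn (fderiv ℝ u) Ω := hu.continuousOn_fderiv_of_isOpen hΩ (by norm_num)
  have hsm : Continuous (fun θ : ℝ => t • circ θ) := continuous_const.fun_smul continuous_circ
  have hcFcomp : ContinuousOn (fun θ : ℝ => fderiv ℝ u (t • circ θ)) (uIcc (0:ℝ) (2*π)) :=
    hcF.comp hsm.continuousOn hmapsθ
  have hpd0c : ContinuousOn (fun θ : ℝ => pd u 0 (t • circ θ)) (uIcc (0:ℝ) (2*π)) :=
    hcFcomp.clm_apply continuousOn_const
  have hpd1c : ContinuousOn (fun θ : ℝ => pd u 1 (t • circ θ)) (uIcc (0:ℝ) (2*π)) :=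
    hcFcomp.clm_apply continuousOn_const
  have h1 : IntervalIntegrable (fun θ => t^2 * ‖fderiv ℝ u (t • circ θ) (circ θ)‖^2)
      volume 0 (2*π) := by
    apply ContinuousOn.intervalIntegrable
    exact continuousOn_const.mul
      (((hcFcomp.clm_apply continuous_circ.continuousOn).norm).pow 2)
  have h2 : IntervalIntegrable (fun θ => t^2/2 * gradSq u (t • circ θ)) volume 0 (2*π) := by
    apply ContinuousOn.intervalIntegrable
    exact continuousOn_const.mul (((hpd0c.norm).pow 2).add ((hpd1c.norm).pow 2))
  calc t * ∫ θ in (0:ℝ)..(2*π), (W₀ (t • circ θ) * Real.cos θ + W₁ (t • circ θ) * Real.sin θ)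
      = ∫ θ in (0:ℝ)..(2*π), t * (W₀ (t • circ θ) * Real.cos θ + W₁ (t • circ θ) * Real.sin θ) :=
        (intervalIntegral.integral_const_mul _ _).symm
    _ = ∫ θ in (0:ℝ)..(2*π), (t^2 * ‖fderiv ℝ u (t • circ θ) (circ θ)‖^2
          - t^2/2 * gradSq u (t • circ θ)) :=
        intervalIntegral.integral_congr (fun θ _ => hbd θ)
    _ = t^2 * (∫ θ in (0:ℝ)..(2*π), ‖fderiv ℝ u (t • circ θ) (circ θ)‖^2)
          - t^2/2 * ∫ θ in (0:ℝ)..(2*π), gradSq u (t • circ θ) := by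
        rw [intervalIntegral.integral_sub h1 h2, intervalIntegral.integral_const_mul,
          intervalIntegral.integral_const_mul]

end Aux
end
end

section
/- Let n ≥ 2 and let u_k : B₁(0) ⊆ ℝ² → ℝ^{n+1} be smooth maps with |u_k(x)| = 1 for all x, and suppose S_k := sup_{B₁(0)}|∇u_k| is finite for each k. Let α_k → 1 with α_k > 1, let x_k ∈ B₁(0), let λ_k ∈ (0,1) with λ_k → 0, let U ⊆ ℝ² be open with x_k + λ_k·U ⊆ B₁(0) for all large k, and suppose the rescaled maps v_k(x) := u_k(x_k + λ_k·x) converge to a C¹ map v : U → ℝ^{n+1} together with their first derivatives, uniformly on compact subsets of U, where ∇v(x̄) ≠ 0 for some x̄ ∈ U. If lim_{k→∞} S_k^{α_k−1} = 1, then lim_{k→∞} λ_k^{2−2α_k} = 1. (This is the implication, used in Proposition 1.4, that the condition liminf_{α→1}‖∇u_α‖_{C⁰}^{α−1} = 1 forces the concentration exponent μ = lim λ_k^{2−2α_k} of every bubble to equal 1.) -/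
open MeasureTheory Metric Filter
open scoped Topology Real RealInnerProductSpace ENNReal NNReal

noncomputable section

lemma abs_apply_le_norm' (z : E2) (i : Fin 2) : |z i| ≤ ‖z‖ := by
  rw [EuclideanSpace.norm_eq]
  rw [← Real.sqrt_sq_eq_abs]
  apply Real.sqrt_le_sqrt
  fin_cases i <;> simp [Fin.sum_univ_two] <;> positivity

lemma opnorm_le' {F : Type*} [NormedAddCommGroup F] [NormedSpace ℝ F] (L : E2 →L[ℝ] F) :
    ‖L‖ ≤ ‖L (EuclideanSpace.single 0 1)‖ + ‖L (EuclideanSpace.single 1 1)‖ := by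
  refine L.opNorm_le_bound (by positivity) fun z => ?_
  have hz : z = z 0 • EuclideanSpace.single (0 : Fin 2) (1:ℝ)
      + z 1 • EuclideanSpace.single (1 : Fin 2) (1:ℝ) := by
    ext j; fin_cases j <;> simp
  calc ‖L z‖ = ‖z 0 • L (EuclideanSpace.single 0 1) + z 1 • L (EuclideanSpace.single 1 1)‖ := by
        rw [← _root_.map_smul, ← _root_.map_smul, ← map_add, ← hz]
    _ ≤ |z 0| * ‖L (EuclideanSpace.single 0 1)‖ + |z 1| * ‖L (EuclideanSpace.single 1 1)‖ := by
        refine (norm_add_le _ _).trans ?_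
        simp [norm_smul]
    _ ≤ ‖z‖ * ‖L (EuclideanSpace.single 0 1)‖ + ‖z‖ * ‖L (EuclideanSpace.single 1 1)‖ := by
        gcongr <;> [exact abs_apply_le_norm' z 0; exact abs_apply_le_norm' z 1]
    _ = (‖L (EuclideanSpace.single 0 1)‖ + ‖L (EuclideanSpace.single 1 1)‖) * ‖z‖ := by ring

set_option maxHeartbeats 1600000 in
/-- if `S_k = sup_{B₁(0)} |∇u_k|` satisfies `S_k^{α_k−1} → 1`, then for any
bubble extracted at points `x_k` and scales `λ_k` (i.e. `u_k(x_k+λ_k·) → v` in `C¹_loc(U)`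
with `∇v(x̄) ≠ 0` somewhere), the concentration exponent satisfies `λ_k^{2−2α_k} → 1`. -/
theorem stmt19 (n : ℕ) (hn : 2 ≤ n)
    (u : ℕ → E2 → EuclideanSpace ℝ (Fin (n+1)))
    (hsmooth : ∀ k, ContDiffOn ℝ (⊤ : ℕ∞) (u k) (ball 0 1))
    (hsphere : ∀ k, ∀ y ∈ ball (0:E2) 1, ‖u k y‖ = 1)
    (hSfin : ∀ k, BddAbove ((fun y => Real.sqrt (gradSq (u k) y)) '' ball (0:E2) 1))
    (α : ℕ → ℝ) (hα : ∀ k, 1 < α k) (hαlim : Tendsto α atTop (𝓝 1))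
    (x : ℕ → E2) (hx : ∀ k, x k ∈ ball (0:E2) 1)
    (lam : ℕ → ℝ) (hlam : ∀ k, lam k ∈ Set.Ioo (0:ℝ) 1) (hlam0 : Tendsto lam atTop (𝓝 0))
    (U : Set E2) (hU : IsOpen U)
    (hUin : ∀ᶠ k in atTop, ∀ z ∈ U, x k + lam k • z ∈ ball (0:E2) 1)
    (v : E2 → EuclideanSpace ℝ (Fin (n+1))) (hv : ContDiffOn ℝ 1 v U)
    (hconv : ∀ K : Set E2, IsCompact K → K ⊆ U →
      TendstoUniformlyOn (fun k z => u k (x k + lam k • z)) v atTop K ∧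
      TendstoUniformlyOn (fun k z => fderiv ℝ (fun w => u k (x k + lam k • w)) z)
        (fun z => fderiv ℝ v z) atTop K)
    (xbar : E2) (hxbar : xbar ∈ U) (hgrad : fderiv ℝ v xbar ≠ 0)
    (hS : Tendsto (fun k =>
        sSup ((fun y => Real.sqrt (gradSq (u k) y)) '' ball (0:E2) 1) ^ (α k - 1))
      atTop (𝓝 1)) :
    Tendsto (fun k => lam k ^ (2 - 2 * α k)) atTop (𝓝 1) := by

  set T : ℕ → ℝ := fun k => sSup ((fun y => Real.sqrt (gradSq (u k) y)) '' ball (0:E2) 1) with hT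
  set c : ℝ := ‖fderiv ℝ v xbar‖ with hc
  have hcpos : 0 < c := norm_pos_iff.mpr hgrad
  -- convergence at the single point xbar
  have hconv1 := (hconv {xbar} isCompact_singleton (Set.singleton_subset_iff.mpr hxbar)).2
  have htend : Tendsto (fun k => ‖fderiv ℝ (fun w => u k (x k + lam k • w)) xbar‖) atTop (𝓝 c) :=
    (tendstoUniformlyOn_singleton_iff_tendsto.mp hconv1).norm
  have hev1 : ∀ᶠ k in atTop, c / 2 < ‖fderiv ℝ (fun w => u k (x k + lam k • w)) xbar‖ :=
    htend.eventually (eventually_gt_nhds (by linarith))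
  -- eventually c/4 / lam k ≤ T k
  have hkey : ∀ᶠ k in atTop, c / 4 / lam k ≤ T k := by
    filter_upwards [hUin, hev1] with k hk1 hk2
    have hlamk := hlam k
    set p : E2 := x k + lam k • xbar with hp
    have hpmem : p ∈ ball (0:E2) 1 := hk1 xbar hxbar
    have hdu : DifferentiableAt ℝ (u k) p :=
      (((hsmooth k).contDiffAt (isOpen_ball.mem_nhds hpmem)).differentiableAt (by simp))
    have hg : HasFDerivAt (fun w : E2 => x k + lam k • w)
        ((lam k) • ContinuousLinearMap.id ℝ E2) xbar :=
      ((hasFDerivAt_id xbar).const_smul (lam k)).const_add (x k)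
    have hcomp : HasFDerivAt (fun w => u k (x k + lam k • w))
        ((fderiv ℝ (u k) p).comp ((lam k) • ContinuousLinearMap.id ℝ E2)) xbar :=
      (hdu.hasFDerivAt).comp xbar hg
    set L : E2 →L[ℝ] EuclideanSpace ℝ (Fin (n+1)) := fderiv ℝ (u k) p with hL
    have hnormc : ‖fderiv ℝ (fun w => u k (x k + lam k • w)) xbar‖ ≤ lam k * ‖L‖ := by
      rw [hcomp.fderiv]
      have heq : L.comp ((lam k) • ContinuousLinearMap.id ℝ E2) = lam k • L := by
        ext w; simp
      rw [heq]
      refine (ContinuousLinearMap.opNorm_smul_le (lam k) L).trans ?_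
      rw [Real.norm_eq_abs, abs_of_pos hlamk.1]
    have hsq : Real.sqrt (gradSq (u k) p) ≤ T k :=
      le_csSup (hSfin k) ⟨p, hpmem, rfl⟩
    have h0 : ‖L (EuclideanSpace.single 0 1)‖ ≤ Real.sqrt (gradSq (u k) p) := by
      have h := Real.sqrt_le_sqrt (show ‖pd (u k) 0 p‖ ^ 2 ≤ gradSq (u k) p by
        unfold gradSq; nlinarith [sq_nonneg ‖pd (u k) 1 p‖])
      rwa [Real.sqrt_sq (norm_nonneg _)] at h
    have h1 : ‖L (EuclideanSpace.single 1 1)‖ ≤ Real.sqrt (gradSq (u k) p) := by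
      have h := Real.sqrt_le_sqrt (show ‖pd (u k) 1 p‖ ^ 2 ≤ gradSq (u k) p by
        unfold gradSq; nlinarith [sq_nonneg ‖pd (u k) 0 p‖])
      rwa [Real.sqrt_sq (norm_nonneg _)] at h
    have hLle : ‖L‖ ≤ 2 * T k := by
      calc ‖L‖ ≤ ‖L (EuclideanSpace.single 0 1)‖ + ‖L (EuclideanSpace.single 1 1)‖ := opnorm_le' L
        _ ≤ 2 * T k := by linarith [h0.trans hsq, h1.trans hsq]
    have hchain : c / 2 ≤ lam k * (2 * T k) := by
      refine le_trans hk2.le (hnormc.trans ?_)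
      exact mul_le_mul_of_nonneg_left hLle hlamk.1.le
    rw [div_le_iff₀ hlamk.1]
    nlinarith [hlamk.1]
  -- positivity facts
  have hTpos : ∀ᶠ k in atTop, 0 < T k := by
    filter_upwards [hkey] with k hk
    have := (hlam k).1
    have : 0 < c / 4 / lam k := by positivity
    linarith
  -- the base c/4 raised to (α k - 1) tends to 1
  have hc4 : Tendsto (fun k => (c / 4) ^ (α k - 1)) atTop (𝓝 1) := by
    have hα0 : Tendsto (fun k => α k - 1) atTop (𝓝 0) := by
      simpa using hαlim.sub (tendsto_const_nhds (x := (1:ℝ)))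
    have := (tendsto_const_nhds (x := c / 4) (f := atTop (α := ℕ))).rpow hα0 (Or.inl (by positivity))
    simpa using this
  -- upper bound squeeze
  have hupper : Tendsto (fun k => T k ^ (α k - 1) / (c / 4) ^ (α k - 1)) atTop (𝓝 1) := by
    have h := hS.div hc4 one_ne_zero
    rw [div_one] at h
    exact h
  have hmidle : ∀ᶠ k in atTop, lam k ^ (1 - α k) ≤ T k ^ (α k - 1) / (c / 4) ^ (α k - 1) := by
    filter_upwards [hkey] with k hk
    have hlamk := hlam k
    have he : (0:ℝ) ≤ α k - 1 := by linarith [hα k]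
    have hinv : (lam k)⁻¹ ≤ T k / (c / 4) := by
      rw [le_div_iff₀ (by positivity : (0:ℝ) < c/4)]
      calc (lam k)⁻¹ * (c/4) = c / 4 / lam k := by ring
        _ ≤ T k := hk
    have hTk : (0:ℝ) ≤ T k := le_trans (div_nonneg (by positivity) hlamk.1.le) hk
    calc lam k ^ (1 - α k) = ((lam k)⁻¹) ^ (α k - 1) := by
          rw [show (1 - α k) = -(α k - 1) by ring, Real.rpow_neg hlamk.1.le,
            Real.inv_rpow hlamk.1.le]
      _ ≤ (T k / (c / 4)) ^ (α k - 1) := Real.rpow_le_rpow (inv_nonneg.mpr hlamk.1.le) hinv he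
      _ = T k ^ (α k - 1) / (c / 4) ^ (α k - 1) := by rw [Real.div_rpow hTk (by positivity : (0:ℝ) ≤ c/4)]
  have hlower : ∀ k, (1:ℝ) ≤ lam k ^ (1 - α k) := fun k =>
    Real.one_le_rpow_of_pos_of_le_one_of_nonpos (hlam k).1 (hlam k).2.le (by linarith [hα k])
  have hmid : Tendsto (fun k => lam k ^ (1 - α k)) atTop (𝓝 1) :=
    tendsto_of_tendsto_of_tendsto_of_le_of_le' tendsto_const_nhds hupper
      (Eventually.of_forall hlower) hmidle
  have hfinal : ∀ k, lam k ^ (2 - 2 * α k) = (lam k ^ (1 - α k)) ^ (2:ℕ) := by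
    intro k
    rw [← Real.rpow_natCast (lam k ^ (1 - α k)) 2, ← Real.rpow_mul (hlam k).1.le]
    norm_num; ring_nf
  have := hmid.pow 2
  simp only [one_pow] at this
  exact this.congr (fun k => (hfinal k).symm)
end
end
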